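/- Let M = G/H be a nilmanifold of complex dimension n obtained from a complex nilpotent Lie group G with Lie algebra g (complexification g_ℂ) and a discrete subgroup H, endowed with a left-invariant complex structure and a left-invariant holomorphic Poisson bivector field π. If for every p ≥ 0 the natural inclusion of complexes (∧^{p,•} g_ℂ*, ∂̄) ↪ (Γ(M, A_M^{p,•}), ∂̄) is a quasi-isomorphism, then the total cohomology of the finite-dimensional double complex (∧^{•,•} g_ℂ*, ∂_π, ∂̄) is isomorphic to the holomorphic Koszul–Brylinski homology H_•(M, π). -/

import Mathlib

/-!
# Invariant forms compute the Koszul–Brylinski homology of nilmanifolds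

Statement 12 of Chen–Chen–Yang–Yang, *Holomorphic Koszul–Brylinski homologies of
Poisson blow-ups* (Lemma 6.2).

For a nilmanifold `M = G/H` of complex dimension `n` with a left-invariant complex
structure and a left-invariant holomorphic Poisson bivector field `π`, we model the
finite-dimensional double complex `(∧^{•,•} g_ℂ^*, ∂_π, ∂̄)` of left-invariant forms
and the double complex `(Γ(M, A_M^{•,•}), ∂_π, ∂̄)` of global smooth forms — whose
total cohomology computes the holomorphic Koszul–Brylinski homology `H_•(M, π)` — as
abstract double complexes of `ℂ`-vector spaces, together with the natural inclusion.
The theorem: if the inclusion `(∧^{p,•} g_ℂ^*, ∂̄) ↪ (Γ(M, A_M^{p,•}), ∂̄)` is a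
quasi-isomorphism for every `p`, then the total cohomology of the invariant double
complex is isomorphic to `H_•(M, π)`.
-/

/-- A double complex of `ℂ`-vector spaces `(A^{p,q}, d_h, d_v)` with horizontal
differential of bidegree `(-1, 0)` (the Koszul–Brylinski operator `∂_π`) and vertical
differential of bidegree `(0, 1)` (the Dolbeault operator `∂̄`). -/
structure PoissonDoubleComplex where
  A : ℤ → ℤ → Type
  acg : ∀ p q, AddCommGroup (A p q)
  mod : ∀ p q, Module ℂ (A p q)
  dh : ∀ p q, A p q →ₗ[ℂ] A (p - 1) q
  dv : ∀ p q, A p q →ₗ[ℂ] A p (q + 1)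
  dh_dh : ∀ p q (x : A p q), dh (p - 1) q (dh p q x) = 0
  dv_dv : ∀ p q (x : A p q), dv p (q + 1) (dv p q x) = 0
  dh_dv : ∀ p q (x : A p q), dv (p - 1) q (dh p q x) + dh p (q + 1) (dv p q x) = 0

attribute [instance] PoissonDoubleComplex.acg PoissonDoubleComplex.mod

namespace PoissonDoubleComplex

variable (K : PoissonDoubleComplex)

/-- transport along an equality of bidegrees -/
def castA {p p' q q' : ℤ} (hp : p = p') (hq : q = q') : K.A p q →ₗ[ℂ] K.A p' q' := by
  subst hp; subst hq; exact LinearMap.id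

/-- The degree-`k` component of the total complex, with respect to the
Koszul–Brylinski grading `k = n - p + q` (`n` = complex dimension). -/
abbrev Tot (n : ℕ) (k : ℤ) : Type := Π₀ q : ℤ, K.A ((n : ℤ) - k + q) q

/-- the total differential `∂_π + ∂̄` -/
noncomputable def totD (n : ℕ) (k : ℤ) : K.Tot n k →ₗ[ℂ] K.Tot n (k + 1) :=
  DFinsupp.lsum ℂ fun q =>
    (DFinsupp.lsingle (M := fun q' : ℤ => K.A ((n : ℤ) - (k + 1) + q') q') q).comp
      ((K.castA (show (n : ℤ) - k + q - 1 = (n : ℤ) - (k + 1) + q by ring) rfl).comp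
        (K.dh ((n : ℤ) - k + q) q)) +
    (DFinsupp.lsingle (M := fun q' : ℤ => K.A ((n : ℤ) - (k + 1) + q') q') (q + 1)).comp
      ((K.castA (show (n : ℤ) - k + q = (n : ℤ) - (k + 1) + (q + 1) by ring) rfl).comp
        (K.dv ((n : ℤ) - k + q) q))

/-- transport along an equality of total degrees -/
def castTot (n : ℕ) {k k' : ℤ} (h : k = k') : K.Tot n k →ₗ[ℂ] K.Tot n k' := by
  subst h; exact LinearMap.id

/-- the cycles of total degree `k` -/
noncomputable def cycles (n : ℕ) (k : ℤ) : Submodule ℂ (K.Tot n k) :=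
  LinearMap.ker (K.totD n k)

/-- the boundaries of total degree `k` -/
noncomputable def boundaries (n : ℕ) (k : ℤ) : Submodule ℂ (K.Tot n k) :=
  LinearMap.range ((K.castTot n (show k - 1 + 1 = k by ring)).comp (K.totD n (k - 1)))

/-- the `k`-th cohomology of the total complex -/
noncomputable abbrev totCoh (n : ℕ) (k : ℤ) : Type :=
  K.cycles n k ⧸ Submodule.comap (K.cycles n k).subtype (K.boundaries n k)

end PoissonDoubleComplex
namespace PoissonDoubleComplex

variable (K : PoissonDoubleComplex)

@[simp] theorem castA_rfl {p q : ℤ} (h : p = p) (h' : q = q) (x : K.A p q) :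
    K.castA h h' x = x := rfl

@[simp] theorem castA_castA {p p' p'' q q' q'' : ℤ} (h1 : p = p') (h2 : q = q')
    (h3 : p' = p'') (h4 : q' = q'') (x : K.A p q) :
    K.castA h3 h4 (K.castA h1 h2 x) = K.castA (h1.trans h3) (h2.trans h4) x := by
  subst h1; subst h2; subst h3; subst h4; rfl

@[simp] theorem castA_eq_zero {p p' q q' : ℤ} (h1 : p = p') (h2 : q = q') (x : K.A p q) :
    K.castA h1 h2 x = 0 ↔ x = 0 := by
  subst h1; subst h2; simp

theorem castA_inj {p p' q q' : ℤ} (h1 : p = p') (h2 : q = q') {x y : K.A p q}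
    (h : K.castA h1 h2 x = K.castA h1 h2 y) : x = y := by
  subst h1; subst h2; simpa using h

@[simp] theorem dh_castA {p p' q q' : ℤ} (h1 : p = p') (h2 : q = q') (x : K.A p q) :
    K.dh p' q' (K.castA h1 h2 x) = K.castA (show p - 1 = p' - 1 by rw [h1]) h2 (K.dh p q x) := by
  subst h1; subst h2; rfl

@[simp] theorem dv_castA {p p' q q' : ℤ} (h1 : p = p') (h2 : q = q') (x : K.A p q) :
    K.dv p' q' (K.castA h1 h2 x) = K.castA h1 (show q + 1 = q' + 1 by rw [h2]) (K.dv p q x) := by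
  subst h1; subst h2; rfl

theorem tot_single_apply {n : ℕ} {k i j : ℤ} (h : i = j) (x : K.A ((n : ℤ) - k + i) i) :
    (DFinsupp.single (β := fun q : ℤ => K.A ((n : ℤ) - k + q) q) i x) j
      = K.castA (by rw [h]) h x := by
  subst h; simp

theorem totD_single (n : ℕ) (k j : ℤ) (x : K.A ((n : ℤ) - k + j) j) :
    K.totD n k (DFinsupp.single j x) =
      DFinsupp.single (β := fun q : ℤ => K.A ((n : ℤ) - (k + 1) + q) q) j
        (K.castA (show (n : ℤ) - k + j - 1 = (n : ℤ) - (k + 1) + j by ring) rfl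
        (K.dh _ _ x)) +
      DFinsupp.single (β := fun q : ℤ => K.A ((n : ℤ) - (k + 1) + q) q) (j + 1)
        (K.castA (show (n : ℤ) - k + j = (n : ℤ) - (k + 1) + (j + 1) by ring) rfl
        (K.dv _ _ x)) := by
  simp [totD, DFinsupp.lsum_single, DFinsupp.lsingle_apply]

theorem totD_single_apply (n : ℕ) (k j : ℤ) (x : K.A ((n : ℤ) - k + j) j) (q : ℤ) :
    K.totD n k (DFinsupp.single j x) q =
      K.castA (show (n : ℤ) - k + q - 1 = (n : ℤ) - (k + 1) + q by ring) rfl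
        (K.dh _ _ ((DFinsupp.single j x : K.Tot n k) q)) +
      K.castA (show (n : ℤ) - k + (q - 1) = (n : ℤ) - (k + 1) + q by ring)
        (show q - 1 + 1 = q by ring)
        (K.dv _ _ ((DFinsupp.single j x : K.Tot n k) (q - 1))) := by
  rw [totD_single, DFinsupp.add_apply]
  rcases eq_or_ne j q with hjq | hjq
  · subst hjq
    rw [DFinsupp.single_eq_same, DFinsupp.single_eq_of_ne (by omega),
      DFinsupp.single_eq_same, DFinsupp.single_eq_of_ne (by omega)]
    simp
  · rcases eq_or_ne j (q - 1) with hjq1 | hjq1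
    · have hq : q = j + 1 := by omega
      subst hq
      rw [DFinsupp.single_eq_of_ne hjq.symm, DFinsupp.single_eq_same,
        DFinsupp.single_eq_of_ne hjq.symm, K.tot_single_apply hjq1]
      simp
    · rw [DFinsupp.single_eq_of_ne hjq.symm, DFinsupp.single_eq_of_ne (by omega),
        DFinsupp.single_eq_of_ne hjq.symm, DFinsupp.single_eq_of_ne hjq1.symm]
      simp

theorem totD_apply (n : ℕ) (k : ℤ) (u : K.Tot n k) (q : ℤ) :
    K.totD n k u q =
      K.castA (show (n : ℤ) - k + q - 1 = (n : ℤ) - (k + 1) + q by ring) rfl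
        (K.dh _ _ (u q)) +
      K.castA (show (n : ℤ) - k + (q - 1) = (n : ℤ) - (k + 1) + q by ring)
        (show q - 1 + 1 = q by ring)
        (K.dv _ _ (u (q - 1))) := by
  induction u using DFinsupp.induction with
  | h0 => simp
  | ha j x r _ _ ih =>
      rw [map_add, DFinsupp.add_apply, ih, totD_single_apply, DFinsupp.add_apply,
        DFinsupp.add_apply, map_add, map_add, map_add, map_add]
      abel

theorem totD_totD (n : ℕ) (k : ℤ) (u : K.Tot n k) :
    K.totD n (k + 1) (K.totD n k u) = 0 := by
  induction u using DFinsupp.induction with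
  | h0 => simp
  | ha j x r _ _ ih =>
      rw [map_add, map_add, ih, add_zero, totD_single, map_add, totD_single, totD_single]
      simp only [dh_castA, dv_castA, castA_castA]
      rw [show ∀ a b c d, a + b + (c + d) = a + (b + c) + d from fun a b c d => by abel]
      rw [← DFinsupp.single_add]
      have h1 : K.dh _ _ (K.dh ((n : ℤ) - k + j) j x) = 0 := K.dh_dh _ _ x
      have h2 : K.dv _ _ (K.dv ((n : ℤ) - k + j) j x) = 0 := K.dv_dv _ _ x
      have h3 := K.dh_dv ((n : ℤ) - k + j) j x
      rw [h1, h2]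
      have : K.castA (p := (n : ℤ) - k + j - 1)
          (show (n : ℤ) - k + j - 1 = (n:ℤ) - (k+1+1) + (j+1) by ring)
          (show j + 1 = j + 1 from rfl) (K.dv _ _ (K.dh _ _ x)) +
          K.castA (show (n : ℤ) - k + j - 1 = (n:ℤ) - (k+1+1) + (j+1) by ring)
          (show j + 1 = j + 1 from rfl) (K.dh _ _ (K.dv _ _ x)) = 0 := by
        rw [← map_add]
        rw [h3]
        simp
      rw [this]
      simp

end PoissonDoubleComplex
namespace PoissonDoubleComplex

variable (K : PoissonDoubleComplex)

@[simp] theorem castTot_rfl {n : ℕ} {k : ℤ} (h : k = k) (u : K.Tot n k) :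
    K.castTot n h u = u := rfl

theorem castTot_apply {n : ℕ} {k k' : ℤ} (h : k = k') (u : K.Tot n k) (q : ℤ) :
    K.castTot n h u q = K.castA (by rw [h]) rfl (u q) := by
  subst h; simp

theorem totD_castTot {n : ℕ} {k k' : ℤ} (h : k = k') (u : K.Tot n k) :
    K.totD n k' (K.castTot n h u) = K.castTot n (by rw [h]) (K.totD n k u) := by
  subst h; simp

theorem tot_apply_congr {n : ℕ} {k : ℤ} (u : K.Tot n k) {i j : ℤ} (h : i = j) :
    u j = K.castA (by rw [h]) h (u i) := by
  subst h; simp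

theorem tot_bounded {n : ℕ} {k : ℤ}
    (hbd : ∀ p q : ℤ, (p < 0 ∨ (n : ℤ) < p ∨ q < 0 ∨ (n : ℤ) < q) → Subsingleton (K.A p q))
    (u : K.Tot n k) (q : ℤ) (hq : (n : ℤ) < q ∨ q < 0) : u q = 0 :=
  letI := hbd ((n : ℤ) - k + q) q (by omega)
  Subsingleton.elim _ _

end PoissonDoubleComplex

section Main

variable {Kinv Kgl : PoissonDoubleComplex} (ι : ∀ p q, Kinv.A p q →ₗ[ℂ] Kgl.A p q)

/-- the map induced by `ι` on total complexes -/
noncomputable def Phi (n : ℕ) (k : ℤ) : Kinv.Tot n k →ₗ[ℂ] Kgl.Tot n k :=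
  DFinsupp.mapRange.linearMap fun q : ℤ => ι ((n : ℤ) - k + q) q

theorem Phi_apply (n : ℕ) (k : ℤ) (u : Kinv.Tot n k) (q : ℤ) :
    Phi ι n k u q = ι _ q (u q) := by
  simp [Phi]

theorem Phi_single (n : ℕ) (k j : ℤ) (x : Kinv.A ((n : ℤ) - k + j) j) :
    Phi ι n k (DFinsupp.single j x)
      = DFinsupp.single (β := fun q : ℤ => Kgl.A ((n : ℤ) - k + q) q) j (ι _ j x) := by
  simp [Phi]

theorem ι_castA {p p' q q' : ℤ} (h1 : p = p') (h2 : q = q') (x : Kinv.A p q) :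
    ι p' q' (Kinv.castA h1 h2 x) = Kgl.castA h1 h2 (ι p q x) := by
  subst h1; subst h2; rfl

theorem Phi_castTot (n : ℕ) {k k' : ℤ} (h : k = k') (u : Kinv.Tot n k) :
    Phi ι n k' (Kinv.castTot n h u) = Kgl.castTot n h (Phi ι n k u) := by
  subst h; simp

theorem Phi_totD
    (hιh : ∀ p q (x : Kinv.A p q), Kgl.dh p q (ι p q x) = ι (p - 1) q (Kinv.dh p q x))
    (hιv : ∀ p q (x : Kinv.A p q), Kgl.dv p q (ι p q x) = ι p (q + 1) (Kinv.dv p q x))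
    (n : ℕ) (k : ℤ) (u : Kinv.Tot n k) :
    Phi ι n (k + 1) (Kinv.totD n k u) = Kgl.totD n k (Phi ι n k u) := by
  induction u using DFinsupp.induction with
  | h0 => simp
  | ha j x r _ _ ih =>
      simp only [map_add, ih, Phi_single, PoissonDoubleComplex.totD_single, ι_castA]
      rw [← hιh, ← hιv]

end Main
section Main2

open PoissonDoubleComplex

variable {Kinv Kgl : PoissonDoubleComplex} {ι : ∀ p q, Kinv.A p q →ₗ[ℂ] Kgl.A p q}

theorem Phi_inj (hι_inj : ∀ p q, Function.Injective (ι p q)) {n : ℕ} {k : ℤ}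
    (u : Kinv.Tot n k) (h : Phi ι n k u = 0) : u = 0 := by
  ext q
  have : Phi ι n k u q = 0 := by rw [h]; rfl
  rw [Phi_apply] at this
  exact hι_inj _ _ (by simpa using this)

end Main2
section Chase

open PoissonDoubleComplex

variable {Kinv Kgl : PoissonDoubleComplex} {n : ℕ} {ι : ∀ p q, Kinv.A p q →ₗ[ℂ] Kgl.A p q}

theorem chase_inj
    (hbdInv : ∀ p q : ℤ, (p < 0 ∨ (n : ℤ) < p ∨ q < 0 ∨ (n : ℤ) < q) →
      Subsingleton (Kinv.A p q))
    (hι_inj : ∀ p q, Function.Injective (ι p q))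
    (hιh : ∀ p q (x : Kinv.A p q), Kgl.dh p q (ι p q x) = ι (p - 1) q (Kinv.dh p q x))
    (hιv : ∀ p q (x : Kinv.A p q), Kgl.dv p q (ι p q x) = ι p (q + 1) (Kinv.dv p q x))
    (hqis_inj : ∀ p q (x : Kinv.A p q), Kinv.dv p q x = 0 →
      (∃ y : Kgl.A p (q - 1),
        Kgl.castA rfl (show q - 1 + 1 = q by ring) (Kgl.dv p (q - 1) y) = ι p q x) →
      ∃ z : Kinv.A p (q - 1),
        Kinv.castA rfl (show q - 1 + 1 = q by ring) (Kinv.dv p (q - 1) z) = x)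
    (hqis_surj : ∀ p q (u : Kgl.A p q), Kgl.dv p q u = 0 →
      ∃ (x : Kinv.A p q) (y : Kgl.A p (q - 1)),
        Kinv.dv p q x = 0 ∧
        u = ι p q x + Kgl.castA rfl (show q - 1 + 1 = q by ring) (Kgl.dv p (q - 1) y))
    (k : ℤ) :
    ∀ m : ℕ, ∀ (w : Kgl.Tot n (k - 1)) (r : Kinv.Tot n k),
      (∀ q : ℤ, (m : ℤ) ≤ q → w q = 0) →
      (∀ q : ℤ, (m : ℤ) ≤ q → r q = 0) →
      Kgl.castTot n (show k - 1 + 1 = k by ring) (Kgl.totD n (k - 1) w) = Phi ι n k r →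
      ∃ v : Kinv.Tot n (k - 1),
        Kinv.castTot n (show k - 1 + 1 = k by ring) (Kinv.totD n (k - 1) v) = r := by
  intro m
  induction m with
  | zero =>
      intro w r _ hr _
      have hr0 : r = 0 := by
        ext q
        rcases le_or_gt 0 q with hq | hq
        · exact hr q (by exact_mod_cast hq)
        · exact Kinv.tot_bounded hbdInv r q (Or.inr hq)
      exact ⟨0, by simp [hr0]⟩
  | succ m ih =>
      intro w r hw hr hEq
      set b : ℤ := (m : ℤ) with hbdef
      have hw' : ∀ q : ℤ, b + 1 ≤ q → w q = 0 := fun q hq => hw q (by push_cast; omega)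
      have hr' : ∀ q : ℤ, b + 1 ≤ q → r q = 0 := fun q hq => hr q (by push_cast; omega)
      -- step 1: the top component of `w` is a dv-cycle
      have hdvwb : Kgl.dv _ _ (w b) = 0 := by
        have h1 : Kgl.castTot n (show k - 1 + 1 = k by ring)
            (Kgl.totD n (k - 1) w) (b + 1) = Phi ι n k r (b + 1) := by rw [hEq]
        rw [castTot_apply, totD_apply, Phi_apply, hw' (b + 1) le_rfl,
          hr' (b + 1) le_rfl, Kgl.tot_apply_congr w (show b = b + 1 - 1 by ring)] at h1
        simpa using h1
      obtain ⟨x, y, hdvx, hwb⟩ := hqis_surj ((n : ℤ) - (k - 1) + b) b (w b) hdvwb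
      set sx : Kinv.Tot n (k - 1) := DFinsupp.single b x with hsxdef
      set y' : Kgl.A ((n : ℤ) - (k - 1 - 1) + (b - 1)) (b - 1) := Kgl.castA (by ring) rfl y
        with hy'def
      set sy : Kgl.Tot n (k - 1 - 1) := DFinsupp.single (b - 1) y' with hsydef
      set w1 : Kgl.Tot n (k - 1) := w - Phi ι n (k - 1) sx -
        Kgl.castTot n (show k - 1 - 1 + 1 = k - 1 by ring) (Kgl.totD n (k - 1 - 1) sy)
        with hw1def
      set r1 : Kinv.Tot n k := r - Kinv.castTot n (show k - 1 + 1 = k by ring)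
        (Kinv.totD n (k - 1) sx) with hr1def
      have hw1 : ∀ q : ℤ, b ≤ q → w1 q = 0 := by
        intro q hq
        rcases eq_or_lt_of_le hq with hq1 | hq1
        · subst hq1  -- q = b?? direction: hq1 : b = q
          rw [hw1def]
          simp only [DFinsupp.sub_apply]
          rw [castTot_apply, totD_apply, Phi_apply, hsxdef, hsydef,
            DFinsupp.single_eq_same, DFinsupp.single_eq_of_ne (by omega : b ≠ b - 1),
            DFinsupp.single_eq_same]
          rw [hwb, hy'def]
          simp
        · rw [hw1def]
          simp only [DFinsupp.sub_apply]
          rw [castTot_apply, totD_apply, Phi_apply, hsxdef, hsydef, hw' q hq1,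
            DFinsupp.single_eq_of_ne (by omega : q ≠ b),
            DFinsupp.single_eq_of_ne (by omega : q ≠ b - 1),
            DFinsupp.single_eq_of_ne (by omega : q - 1 ≠ b - 1)]
          simp
      
      have hr1' : ∀ q : ℤ, b + 1 ≤ q → r1 q = 0 := by
        intro q hq
        rw [hr1def]
        simp only [DFinsupp.sub_apply]
        rw [castTot_apply, totD_apply, hr' q hq, hsxdef]
        rcases eq_or_lt_of_le hq with hq1 | hq1
        · rw [DFinsupp.single_eq_of_ne (by omega : q ≠ b),
            Kinv.tot_apply_congr (DFinsupp.single b x) (show b = q - 1 by omega),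
            DFinsupp.single_eq_same]
          simp [hdvx]
        · rw [DFinsupp.single_eq_of_ne (by omega : q ≠ b),
            DFinsupp.single_eq_of_ne (by omega : q - 1 ≠ b)]
          simp
      have hchain1 : Kgl.castTot n (show k - 1 + 1 = k by ring) (Kgl.totD n (k - 1) w1)
          = Phi ι n k r1 := by
        rw [hw1def, hr1def, map_sub, map_sub, map_sub, totD_castTot, Kgl.totD_totD,
          ← Phi_totD ι hιh hιv, map_sub, ← Phi_castTot, hEq]
        simp
      clear_value w1 r1
      have hDr1 : Kinv.totD n k r1 = 0 := by
        apply Phi_inj hι_inj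
        rw [Phi_totD ι hιh hιv, ← hchain1, totD_castTot, Kgl.totD_totD]
        simp
      have hdvr1b : Kinv.dv _ _ (r1 b) = 0 := by
        have h2 : Kinv.totD n k r1 (b + 1) = 0 := by rw [hDr1]; rfl
        rw [totD_apply, hr1' (b + 1) le_rfl,
          Kinv.tot_apply_congr r1 (show b = b + 1 - 1 by ring)] at h2
        simpa using h2
      have hexact : ∃ y2 : Kgl.A ((n : ℤ) - k + b) (b - 1),
          Kgl.castA rfl (show b - 1 + 1 = b by ring) (Kgl.dv _ _ y2) = ι _ b (r1 b) := by
        refine ⟨Kgl.castA (by ring) rfl (w1 (b - 1)), ?_⟩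
        have h3 : Kgl.castTot n (show k - 1 + 1 = k by ring)
            (Kgl.totD n (k - 1) w1) b = Phi ι n k r1 b := by rw [hchain1]
        rw [castTot_apply, totD_apply, Phi_apply, hw1 b le_rfl] at h3
        simp at h3 ⊢
        exact h3
      obtain ⟨v0, hv0⟩ := hqis_inj _ b (r1 b) hdvr1b hexact
      set v0' : Kinv.A ((n : ℤ) - (k - 1) + (b - 1)) (b - 1) := Kinv.castA (by ring) rfl v0
        with hv0'def
      set sv : Kinv.Tot n (k - 1) := DFinsupp.single (b - 1) v0' with hsvdef
      set r2 : Kinv.Tot n k := r1 - Kinv.castTot n (show k - 1 + 1 = k by ring)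
        (Kinv.totD n (k - 1) sv) with hr2def
      set w2 : Kgl.Tot n (k - 1) := w1 - Phi ι n (k - 1) sv with hw2def
      have hr2 : ∀ q : ℤ, b ≤ q → r2 q = 0 := by
        intro q hq
        rw [hr2def]
        simp only [DFinsupp.sub_apply]
        rw [castTot_apply, totD_apply, hsvdef]
        rcases eq_or_lt_of_le hq with hq1 | hq1
        · subst hq1
          rw [DFinsupp.single_eq_of_ne (by omega : b ≠ b - 1), DFinsupp.single_eq_same,
            hv0'def]
          simp [hv0]
        · rw [hr1' q hq1, DFinsupp.single_eq_of_ne (by omega : q ≠ b - 1),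
            DFinsupp.single_eq_of_ne (by omega : q - 1 ≠ b - 1)]
          simp
      have hw2' : ∀ q : ℤ, b ≤ q → w2 q = 0 := by
        intro q hq
        rw [hw2def]
        simp only [DFinsupp.sub_apply]
        rw [hw1 q hq, Phi_apply, hsvdef, DFinsupp.single_eq_of_ne (by omega : q ≠ b - 1)]
        simp
      have hchain2 : Kgl.castTot n (show k - 1 + 1 = k by ring) (Kgl.totD n (k - 1) w2)
          = Phi ι n k r2 := by
        rw [hw2def, hr2def, map_sub, map_sub, ← Phi_totD ι hιh hιv, map_sub,
          ← Phi_castTot, hchain1]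
      obtain ⟨v, hv⟩ := ih w2 r2 hw2' hr2 hchain2
      refine ⟨v + sx + sv, ?_⟩
      rw [map_add, map_add, map_add, map_add, hv, hr2def, hr1def]
      abel

end Chase
section Chase2

open PoissonDoubleComplex

variable {Kinv Kgl : PoissonDoubleComplex} {n : ℕ} {ι : ∀ p q, Kinv.A p q →ₗ[ℂ] Kgl.A p q}

theorem chase_surj
    (hbdGl : ∀ p q : ℤ, (p < 0 ∨ (n : ℤ) < p ∨ q < 0 ∨ (n : ℤ) < q) →
      Subsingleton (Kgl.A p q))
    (hι_inj : ∀ p q, Function.Injective (ι p q))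
    (hιh : ∀ p q (x : Kinv.A p q), Kgl.dh p q (ι p q x) = ι (p - 1) q (Kinv.dh p q x))
    (hιv : ∀ p q (x : Kinv.A p q), Kgl.dv p q (ι p q x) = ι p (q + 1) (Kinv.dv p q x))
    (hqis_inj : ∀ p q (x : Kinv.A p q), Kinv.dv p q x = 0 →
      (∃ y : Kgl.A p (q - 1),
        Kgl.castA rfl (show q - 1 + 1 = q by ring) (Kgl.dv p (q - 1) y) = ι p q x) →
      ∃ z : Kinv.A p (q - 1),
        Kinv.castA rfl (show q - 1 + 1 = q by ring) (Kinv.dv p (q - 1) z) = x)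
    (hqis_surj : ∀ p q (u : Kgl.A p q), Kgl.dv p q u = 0 →
      ∃ (x : Kinv.A p q) (y : Kgl.A p (q - 1)),
        Kinv.dv p q x = 0 ∧
        u = ι p q x + Kgl.castA rfl (show q - 1 + 1 = q by ring) (Kgl.dv p (q - 1) y))
    (k : ℤ) :
    ∀ m : ℕ, ∀ (u : Kgl.Tot n k) (z : Kinv.Tot n k),
      (∀ q : ℤ, (m : ℤ) ≤ q → u q = 0) →
      Kgl.totD n k u + Phi ι n (k + 1) (Kinv.totD n k z) = 0 →
      ∃ (z' : Kinv.Tot n k) (w : Kgl.Tot n (k - 1)),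
        Kinv.totD n k z' = 0 ∧
        u + Phi ι n k z = Phi ι n k z' +
          Kgl.castTot n (show k - 1 + 1 = k by ring) (Kgl.totD n (k - 1) w) := by
  intro m
  induction m with
  | zero =>
      intro u z hsupp hD
      have hu0 : u = 0 := by
        ext q
        rcases le_or_gt 0 q with hq | hq
        · exact hsupp q (by exact_mod_cast hq)
        · exact Kgl.tot_bounded hbdGl u q (Or.inr hq)
      have hz : Kinv.totD n k z = 0 := by
        apply Phi_inj hι_inj
        have := hD
        rw [hu0, map_zero, zero_add] at this
        exact this
      exact ⟨z, 0, hz, by simp [hu0]⟩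
  | succ m ih =>
      intro u z hsupp hD
      set b : ℤ := (m : ℤ) with hbdef
      have hsupp' : ∀ q : ℤ, b + 1 ≤ q → u q = 0 := fun q hq => hsupp q (by push_cast; omega)
      have hDz_top : ∀ q : ℤ, b + 2 ≤ q → (Kinv.totD n k z) q = 0 := by
        intro q hq
        have h0 : (Kgl.totD n k u + Phi ι n (k + 1) (Kinv.totD n k z)) q = 0 := by
          rw [hD]; rfl
        rw [DFinsupp.add_apply, totD_apply, hsupp' q (by omega), hsupp' (q - 1) (by omega),
          Phi_apply] at h0
        simp only [map_zero, PoissonDoubleComplex.castA_eq_zero] at h0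
        refine hι_inj _ _ ?_
        rw [map_zero]
        simpa using h0
      set e : Kinv.A ((n : ℤ) - (k + 1) + (b + 1)) (b + 1) := Kinv.totD n k z (b + 1)
        with hedef
      have hdve : Kinv.dv _ _ e = 0 := by
        have h1 : Kinv.totD n (k + 1) (Kinv.totD n k z) (b + 2) = 0 := by
          rw [Kinv.totD_totD]; rfl
        rw [totD_apply, hDz_top (b + 2) le_rfl,
          Kinv.tot_apply_congr (Kinv.totD n k z) (show b + 1 = b + 2 - 1 by ring),
          ← hedef] at h1
        simpa using h1
      have hexact : ∃ y : Kgl.A ((n : ℤ) - (k + 1) + (b + 1)) (b + 1 - 1),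
          Kgl.castA rfl (show b + 1 - 1 + 1 = b + 1 by ring) (Kgl.dv _ _ y)
            = ι _ (b + 1) (-e) := by
        refine ⟨Kgl.castA (by ring) (by ring) (u b), ?_⟩
        have h2 : (Kgl.totD n k u + Phi ι n (k + 1) (Kinv.totD n k z)) (b + 1) = 0 := by
          rw [hD]; rfl
        rw [DFinsupp.add_apply, totD_apply, hsupp' (b + 1) le_rfl, Phi_apply, ← hedef,
          Kgl.tot_apply_congr u (show b = b + 1 - 1 by ring)] at h2
        simp only [map_zero, PoissonDoubleComplex.dv_castA,
          PoissonDoubleComplex.castA_castA, PoissonDoubleComplex.castA_rfl, zero_add,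
          map_neg] at h2 ⊢
        exact eq_neg_of_add_eq_zero_left h2
      obtain ⟨zp, hzp⟩ := hqis_inj _ (b + 1) (-e) (by simp [hdve]) hexact
      set winv : Kinv.A ((n : ℤ) - k + b) b := Kinv.castA (by ring) (by ring) zp
        with hwinvdef
      set sw : Kinv.Tot n k := DFinsupp.single b winv with hswdef
      set z1 : Kinv.Tot n k := z + sw with hz1def
      set u1 : Kgl.Tot n k := u - Phi ι n k sw with hu1def
      have hu1supp : ∀ q : ℤ, b + 1 ≤ q → u1 q = 0 := by
        intro q hq
        rw [hu1def]
        simp only [DFinsupp.sub_apply]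
        rw [hsupp' q hq, Phi_apply, hswdef, DFinsupp.single_eq_of_ne (by omega : q ≠ b)]
        simp
      have hD1 : Kgl.totD n k u1 + Phi ι n (k + 1) (Kinv.totD n k z1) = 0 := by
        rw [hu1def, hz1def, map_sub, map_add, map_add, ← Phi_totD ι hιh hιv]
        have harr : ∀ a c d : Kgl.Tot n (k + 1), a - d + (c + d) = a + c :=
          fun _ _ _ => by abel
        rw [harr, hD]
      have hDz1b1 : Kinv.totD n k z1 (b + 1) = 0 := by
        rw [hz1def, map_add, DFinsupp.add_apply, ← hedef, totD_apply, hswdef,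
          DFinsupp.single_eq_of_ne (by omega : b + 1 ≠ b),
          Kinv.tot_apply_congr (DFinsupp.single b winv) (show b = b + 1 - 1 by ring),
          DFinsupp.single_eq_same, hwinvdef]
        simp [hzp]
      have hdvu1b : Kgl.dv _ _ (u1 b) = 0 := by
        have h3 : (Kgl.totD n k u1 + Phi ι n (k + 1) (Kinv.totD n k z1)) (b + 1) = 0 := by
          rw [hD1]; rfl
        rw [DFinsupp.add_apply, totD_apply, hu1supp (b + 1) le_rfl, Phi_apply, hDz1b1,
          Kgl.tot_apply_congr u1 (show b = b + 1 - 1 by ring)] at h3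
        simpa using h3
      obtain ⟨x, y, hdvx, hdecomp⟩ := hqis_surj _ b (u1 b) hdvu1b
      set y' : Kgl.A ((n : ℤ) - (k - 1) + (b - 1)) (b - 1) := Kgl.castA (by ring) rfl y
        with hy'def
      set sy : Kgl.Tot n (k - 1) := DFinsupp.single (b - 1) y' with hsydef
      set sx : Kinv.Tot n k := DFinsupp.single b x with hsxdef
      set u2 : Kgl.Tot n k := u1 - Phi ι n k sx -
        Kgl.castTot n (show k - 1 + 1 = k by ring) (Kgl.totD n (k - 1) sy) with hu2def
      set z2 : Kinv.Tot n k := z1 + sx with hz2def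
      have hu2supp : ∀ q : ℤ, b ≤ q → u2 q = 0 := by
        intro q hq
        rcases eq_or_lt_of_le hq with hq1 | hq1
        · subst hq1
          rw [hu2def]
          simp only [DFinsupp.sub_apply]
          rw [castTot_apply, totD_apply, Phi_apply, hsydef, hsxdef,
            DFinsupp.single_eq_same, DFinsupp.single_eq_of_ne (by omega : b ≠ b - 1),
            DFinsupp.single_eq_same]
          rw [hdecomp, hy'def]
          simp
        · rw [hu2def]
          simp only [DFinsupp.sub_apply]
          rw [castTot_apply, totD_apply, Phi_apply, hsydef, hsxdef, hu1supp q hq1,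
            DFinsupp.single_eq_of_ne (by omega : q ≠ b),
            DFinsupp.single_eq_of_ne (by omega : q ≠ b - 1),
            DFinsupp.single_eq_of_ne (by omega : q - 1 ≠ b - 1)]
          simp
      clear_value u1 z1
      have hD2 : Kgl.totD n k u2 + Phi ι n (k + 1) (Kinv.totD n k z2) = 0 := by
        rw [hu2def, hz2def, map_sub, map_sub, map_add, map_add, totD_castTot,
          Kgl.totD_totD, map_zero, sub_zero, ← Phi_totD ι hιh hιv]
        have harr : ∀ a c d : Kgl.Tot n (k + 1), a - d + (c + d) = a + c :=
          fun _ _ _ => by abel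
        rw [harr, hD1]
      obtain ⟨z', w', hz', heq⟩ := ih u2 z2 hu2supp hD2
      refine ⟨z', w' + sy, hz', ?_⟩
      have key : u + Phi ι n k z = (u2 + Phi ι n k z2) +
          Kgl.castTot n (show k - 1 + 1 = k by ring) (Kgl.totD n (k - 1) sy) := by
        rw [hu2def, hz2def, hu1def, hz1def, map_add, map_add]
        abel
      rw [key, heq, map_add, map_add]
      abel

end Chase2

/-- **Invariant forms compute the Koszul–Brylinski homology of nilmanifolds**
(Lemma 6.2): let `M = G/H` be a nilmanifold of complex dimension `n` obtained from a
complex nilpotent Lie group `G` with Lie algebra `g` and a discrete subgroup `H`,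
endowed with a left-invariant complex structure and a left-invariant holomorphic
Poisson bivector field `π`.  Let `Kinv = (∧^{•,•} g_ℂ^*, ∂_π, ∂̄)` be the
finite-dimensional double complex of left-invariant forms, `Kgl` the double complex
`(Γ(M, A_M^{•,•}), ∂_π, ∂̄)` of global smooth forms (whose total cohomology is
`H_•(M, π)`), and `ι` the natural inclusion, commuting with both differentials.  If
for every `p` the inclusion of column complexes `(∧^{p,•} g_ℂ^*, ∂̄) ↪ (A_M^{p,•}, ∂̄)`
is a quasi-isomorphism, then the total cohomology of `Kinv` is isomorphic to the
holomorphic Koszul–Brylinski homology `H_•(M, π)`. -/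
theorem nilmanifold_invariant_kb
    (Kinv Kgl : PoissonDoubleComplex) (n : ℕ)
    (hbdInv : ∀ p q : ℤ, (p < 0 ∨ (n : ℤ) < p ∨ q < 0 ∨ (n : ℤ) < q) →
      Subsingleton (Kinv.A p q))
    (hbdGl : ∀ p q : ℤ, (p < 0 ∨ (n : ℤ) < p ∨ q < 0 ∨ (n : ℤ) < q) →
      Subsingleton (Kgl.A p q))
    (hfin : ∀ p q : ℤ, FiniteDimensional ℂ (Kinv.A p q))
    (ι : ∀ p q, Kinv.A p q →ₗ[ℂ] Kgl.A p q)
    (hι_inj : ∀ p q, Function.Injective (ι p q))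
    (hιh : ∀ p q (x : Kinv.A p q), Kgl.dh p q (ι p q x) = ι (p - 1) q (Kinv.dh p q x))
    (hιv : ∀ p q (x : Kinv.A p q), Kgl.dv p q (ι p q x) = ι p (q + 1) (Kinv.dv p q x))
    -- `ι` is a quasi-isomorphism on each column complex `(∧^{p,•}, ∂̄) → (A^{p,•}, ∂̄)`:
    (hqis_inj : ∀ p q (x : Kinv.A p q), Kinv.dv p q x = 0 →
      (∃ y : Kgl.A p (q - 1),
        Kgl.castA rfl (show q - 1 + 1 = q by ring) (Kgl.dv p (q - 1) y) = ι p q x) →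
      ∃ z : Kinv.A p (q - 1),
        Kinv.castA rfl (show q - 1 + 1 = q by ring) (Kinv.dv p (q - 1) z) = x)
    (hqis_surj : ∀ p q (u : Kgl.A p q), Kgl.dv p q u = 0 →
      ∃ (x : Kinv.A p q) (y : Kgl.A p (q - 1)),
        Kinv.dv p q x = 0 ∧
        u = ι p q x + Kgl.castA rfl (show q - 1 + 1 = q by ring) (Kgl.dv p (q - 1) y)) :
    ∀ k : ℤ, Nonempty (Kinv.totCoh n k ≃ₗ[ℂ] Kgl.totCoh n k) := by
  
  intro k
  classical
  have hcyc : ∀ x ∈ Kinv.cycles n k, Phi ι n k x ∈ Kgl.cycles n k := by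
    intro x hx
    rw [PoissonDoubleComplex.cycles, LinearMap.mem_ker] at hx ⊢
    rw [← Phi_totD ι hιh hιv, hx, map_zero]
  let F : (Kinv.cycles n k) →ₗ[ℂ] Kgl.totCoh n k :=
    (Submodule.mkQ _).comp ((Phi ι n k).restrict hcyc)
  have hFapply : ∀ x : Kinv.cycles n k,
      F x = Submodule.Quotient.mk ⟨Phi ι n k x.1, hcyc x.1 x.2⟩ := fun x => rfl
  have hker : Submodule.comap (Kinv.cycles n k).subtype (Kinv.boundaries n k) ≤
      LinearMap.ker F := by
    rintro ⟨x, hx⟩ hmem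
    rw [Submodule.mem_comap] at hmem
    obtain ⟨w, hw⟩ := hmem
    rw [LinearMap.mem_ker, hFapply, Submodule.Quotient.mk_eq_zero, Submodule.mem_comap]
    refine ⟨Phi ι n (k - 1) w, ?_⟩
    show Kgl.castTot n _ (Kgl.totD n (k - 1) (Phi ι n (k - 1) w)) = Phi ι n k x
    rw [← Phi_totD ι hιh hιv, ← Phi_castTot]
    have hw' : Kinv.castTot n _ (Kinv.totD n (k - 1) w) = x := hw
    rw [hw']
  let Fbar := Submodule.liftQ _ F hker
  have hinj : Function.Injective Fbar := by
    rw [← LinearMap.ker_eq_bot]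
    apply Submodule.ker_liftQ_eq_bot
    intro x hxker
    rw [LinearMap.mem_ker, hFapply, Submodule.Quotient.mk_eq_zero,
      Submodule.mem_comap] at hxker
    obtain ⟨w, hw⟩ := hxker
    rw [Submodule.mem_comap]
    have hw' : Kgl.castTot n _ (Kgl.totD n (k - 1) w) = Phi ι n k x.1 := hw
    obtain ⟨v, hv⟩ := chase_inj hbdInv hι_inj hιh hιv hqis_inj hqis_surj k (n + 1) w x.1
      (fun q hq => Kgl.tot_bounded hbdGl w q (by left; push_cast at hq ⊢; omega))
      (fun q hq => Kinv.tot_bounded hbdInv x.1 q (by left; push_cast at hq ⊢; omega))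
      hw'
    exact ⟨v, hv⟩
  have hsurj : Function.Surjective Fbar := by
    intro c
    obtain ⟨y, rfl⟩ := Submodule.Quotient.mk_surjective _ c
    have hy : Kgl.totD n k y.1 = 0 := LinearMap.mem_ker.mp y.2
    obtain ⟨z', w, hz', heq⟩ := chase_surj hbdGl hι_inj hιh hιv hqis_inj hqis_surj k
      (n + 1) y.1 0
      (fun q hq => Kgl.tot_bounded hbdGl y.1 q (by left; push_cast at hq ⊢; omega))
      (by rw [hy, map_zero, map_zero, add_zero])
    rw [map_zero, add_zero] at heq
    refine ⟨Submodule.Quotient.mk ⟨z', LinearMap.mem_ker.mpr hz'⟩, ?_⟩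
    show F _ = _
    rw [hFapply, Submodule.Quotient.eq, Submodule.mem_comap]
    refine ⟨-w, ?_⟩
    show Kgl.castTot n _ (Kgl.totD n (k - 1) (-w)) = Phi ι n k z' - y.1
    rw [map_neg, map_neg, heq]
    abel
  exact ⟨LinearEquiv.ofBijective Fbar ⟨hinj, hsurj⟩⟩
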